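/- For every c, k ∈ ℕ and every tree T, if a (possibly infinite) graph G is c-quasi-isometric to a graph H that has a T-decomposition of width at most k, then G has a (k+1, 3c²)-centred T-decomposition (i.e. a tree-decomposition over the same tree T each of whose bags is (k+1, 3c²)-centred). -/

import Mathlib

open SimpleGraph
open scoped ENNReal NNReal

/-- `φ` is a `q`-quasi-isometry from `G` to `H`:
`q⁻¹ · dist_G(u,v) − q ≤ dist_H(φ u, φ v) ≤ q · dist_G(u,v) + q` (distances taken in `ℝ≥0∞`,
where unreachable pairs have distance `∞`), and every vertex of `H` is within distance `q`
of the image of `φ`. -/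
def IsQuasiIsometry {V W : Type} (q : ℕ) (G : SimpleGraph V) (H : SimpleGraph W)
    (φ : V → W) : Prop :=
  (∀ u v : V, (G.edist u v : ℝ≥0∞) / q - q ≤ (H.edist (φ u) (φ v) : ℝ≥0∞)) ∧
  (∀ u v : V, (H.edist (φ u) (φ v) : ℝ≥0∞) ≤ q * (G.edist u v : ℝ≥0∞) + q) ∧
  (∀ x : W, ∃ v : V, (H.edist x (φ v) : ℝ≥0∞) ≤ q)

/-- `G` is `q`-quasi-isometric to `H`. -/
def QuasiIsometric {V W : Type} (q : ℕ) (G : SimpleGraph V) (H : SimpleGraph W) : Prop :=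
  ∃ φ : V → W, IsQuasiIsometry q G H φ

/-- `(T, β)` is a `T`-decomposition of `G`: every edge of `G` has both ends in some bag, and
for every vertex `v` of `G` the set of nodes whose bag contains `v` induces a non-empty
connected subgraph of `T`. -/
def IsTreeDecomp {X V : Type} (T : SimpleGraph X) (G : SimpleGraph V) (β : X → Set V) : Prop :=
  (∀ ⦃u v : V⦄, G.Adj u v → ∃ x : X, u ∈ β x ∧ v ∈ β x) ∧
  (∀ v : V, (T.induce {x : X | v ∈ β x}).Connected)

/-- `(L, β)` is an `L`-decomposition of `G` over the line (linearly ordered set) `L`: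
every edge of `G` has both ends in some bag, and for every vertex `v` of `G` the set of
points of `L` whose bag contains `v` is a non-empty interval of `L`. -/
def IsLineDecomp {L V : Type} [LinearOrder L] (G : SimpleGraph V) (β : L → Set V) : Prop :=
  (∀ ⦃u v : V⦄, G.Adj u v → ∃ x : L, u ∈ β x ∧ v ∈ β x) ∧
  (∀ v : V, {x : L | v ∈ β x}.Nonempty ∧ {x : L | v ∈ β x}.OrdConnected)

/-- `S` is `(k,d)`-centred in `G`: `S` can be partitioned into at most `k` sets, each of
weak diameter at most `d` in `G`. -/
def Centred {V : Type} (G : SimpleGraph V) (k d : ℕ) (S : Set V) : Prop :=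
  ∃ P : Fin k → Set V,
    (⋃ i, P i) = S ∧
    (∀ i j : Fin k, i ≠ j → Disjoint (P i) (P j)) ∧
    (∀ i : Fin k, ∀ u ∈ P i, ∀ v ∈ P i, G.edist u v ≤ (d : ℕ∞))

/-- The independence number of the subgraph of `G` induced by `S` is at most `k`. -/
def IndepAtMost {V : Type} (G : SimpleGraph V) (S : Set V) (k : ℕ) : Prop :=
  ∀ I ⊆ S, (∀ u ∈ I, ∀ v ∈ I, u ≠ v → ¬ G.Adj u v) → I.encard ≤ (k : ℕ∞)

/-- The domination number of the subgraph of `G` induced by `S` is at most `k`. -/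
def DomAtMost {V : Type} (G : SimpleGraph V) (S : Set V) (k : ℕ) : Prop :=
  ∃ D ⊆ S, D.encard ≤ (k : ℕ∞) ∧ ∀ v ∈ S, v ∉ D → ∃ u ∈ D, G.Adj v u

/-- `P` is a partition of the graph `G`: a collection of non-empty vertex sets, each inducing
a connected subgraph of `G`, such that every vertex lies in exactly one part. -/
def IsGraphPartition {V : Type} (G : SimpleGraph V) (P : Set (Set V)) : Prop :=
  (∀ A ∈ P, A.Nonempty) ∧
  (∀ A ∈ P, (G.induce A).Connected) ∧
  (∀ v : V, ∃! A, A ∈ P ∧ v ∈ A)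

/-- The quotient graph `G/P`: vertices are the parts of `P`, and distinct parts are adjacent
iff some vertex of one is adjacent in `G` to some vertex of the other. -/
def quotientGraph {V : Type} (G : SimpleGraph V) (P : Set (Set V)) : SimpleGraph P where
  Adj A B := A ≠ B ∧ ∃ a ∈ (A : Set V), ∃ b ∈ (B : Set V), G.Adj a b
  symm := ⟨by
    rintro A B ⟨hne, a, ha, b, hb, hab⟩
    exact ⟨hne.symm, b, hb, a, ha, hab.symm⟩⟩
  loopless := ⟨by rintro A ⟨hne, -⟩; exact hne rfl⟩

/-- `sim_G(A) ≤ k`: every induced matching of `G` between `A` and its complement has at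
most `k` edges. -/
def SimAtMost {V : Type} (G : SimpleGraph V) (A : Set V) (k : ℕ) : Prop :=
  ∀ (m : ℕ) (a b : Fin m → V),
    Function.Injective a → Function.Injective b →
    (∀ i, a i ∈ A) → (∀ i, b i ∉ A) →
    (∀ i, G.Adj (a i) (b i)) →
    (∀ i j : Fin m, i ≠ j →
      ¬ G.Adj (a i) (a j) ∧ ¬ G.Adj (b i) (b j) ∧ ¬ G.Adj (a i) (b j)) →
    m ≤ k

/-- `G` has sim-width at most `k`: there is a branch-decomposition `(T, L)` — a subcubic
tree `T` together with a map `L` from the vertices of `G` to the leaves of `T` — such that,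
for every edge `ab` of `T`, the side of the associated vertex partition consisting of the
vertices mapped to the component of `T − ab` containing `a` satisfies `sim_G ≤ k`. -/
def SimWidthAtMost {V : Type} (G : SimpleGraph V) (k : ℕ) : Prop :=
  ∃ (X : Type) (T : SimpleGraph X) (L : V → X),
    T.IsTree ∧
    (∀ x : X, (T.neighborSet x).encard ≤ 3) ∧
    (∀ v : V, (T.neighborSet (L v)).encard = 1) ∧
    (∀ a b : X, T.Adj a b →
      SimAtMost G {v : V | (T.deleteEdges {s(a, b)}).Reachable (L v) a} k)


section Aux

open SimpleGraph Walk

variable {Z : Type} {K : SimpleGraph Z}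

private lemma edist_getVert_le' {a b : Z} (p : K.Walk a b) (n : ℕ) :
    K.edist a (p.getVert n) ≤ (n : ℕ∞) := by
  induction p generalizing n with
  | nil => simp [SimpleGraph.Walk.getVert]
  | @cons a u b h q ih =>
    cases n with
    | zero => simp
    | succ n =>
      rw [SimpleGraph.Walk.getVert_cons_succ]
      calc K.edist a (q.getVert n) ≤ K.edist a u + K.edist u (q.getVert n) :=
            SimpleGraph.edist_triangle
        _ ≤ 1 + (n : ℕ∞) := by
            gcongr
            · exact (SimpleGraph.edist_le h.toWalk).trans (by simp)
            · exact ih n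
        _ = ((n + 1 : ℕ) : ℕ∞) := by push_cast; ring

private lemma edist_getVert_right' {a b : Z} (p : K.Walk a b) (n : ℕ) :
    K.edist (p.getVert n) b ≤ ((p.length - n : ℕ) : ℕ∞) := by
  induction p generalizing n with
  | nil => simp [SimpleGraph.Walk.getVert]
  | @cons a u b h q ih =>
    cases n with
    | zero =>
      simp only [SimpleGraph.Walk.getVert_zero, SimpleGraph.Walk.length_cons, Nat.sub_zero]
      exact SimpleGraph.edist_le (Walk.cons h q)
    | succ n =>
      rw [SimpleGraph.Walk.getVert_cons_succ]
      simpa [Nat.succ_sub_succ] using ih n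

private lemma exists_mid' {a b : Z} {c : ℕ} (h : K.edist a b ≤ ((2 * c : ℕ) : ℕ∞)) :
    ∃ w : Z, K.edist a w ≤ (c : ℕ∞) ∧ K.edist w b ≤ (c : ℕ∞) := by
  have hne : K.edist a b ≠ ⊤ := by
    intro ht
    rw [ht, top_le_iff] at h
    exact (ENat.coe_ne_top _) h
  obtain ⟨p, hp⟩ := SimpleGraph.exists_walk_of_edist_ne_top hne
  have hlen : p.length ≤ 2 * c := by
    have : (p.length : ℕ∞) ≤ ((2 * c : ℕ) : ℕ∞) := hp ▸ h
    exact_mod_cast this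
  refine ⟨p.getVert c, edist_getVert_le' p c, ?_⟩
  refine (edist_getVert_right' p c).trans ?_
  have : p.length - c ≤ c := by omega
  exact_mod_cast this

private lemma reach_induce_mono {A S : Set Z} (hAS : A ⊆ S)
    (hA : (K.induce A).Connected) {a b : Z} (ha : a ∈ A) (hb : b ∈ A)
    (ha' : a ∈ S) (hb' : b ∈ S) :
    (K.induce S).Reachable ⟨a, ha'⟩ ⟨b, hb'⟩ := by
  have h := hA.preconnected ⟨a, ha⟩ ⟨b, hb⟩
  exact h.map ⟨Set.inclusion hAS, fun {u v} hu => hu⟩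

end Aux

/-- For every `c, k ∈ ℕ` and every tree `T`, if a (possibly infinite) graph
`G` is `c`-quasi-isometric to a graph `H` that has a `T`-decomposition of width at most `k`,
then `G` has a `(k+1, 3c²)`-centred `T`-decomposition. -/
theorem centredTDecomp_of_quasiIsometric
    (c k : ℕ) (X V W : Type) (T : SimpleGraph X) (hT : T.IsTree)
    (G : SimpleGraph V) (H : SimpleGraph W) (β : X → Set W)
    (hdec : IsTreeDecomp T H β) (hwidth : ∀ x : X, (β x).encard ≤ ((k + 1 : ℕ) : ℕ∞))
    (hQI : QuasiIsometric c G H) :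
    ∃ β' : X → Set V,
      IsTreeDecomp T G β' ∧ ∀ x : X, Centred G (k + 1) (3 * c ^ 2) (β' x) := by
    classical
  obtain ⟨φ, h1, h2, h3⟩ := hQI
  -- key quantitative facts
  have bound1 : ∀ u v : V, G.Adj u v →
      H.edist (φ u) (φ v) ≤ ((2 * c : ℕ) : ℕ∞) := by
    intro u v hadj
    have hG1 : G.edist u v = 1 := SimpleGraph.edist_eq_one_iff_adj.mpr hadj
    have h2' := h2 u v
    rw [hG1] at h2'
    have : (H.edist (φ u) (φ v) : ℝ≥0∞) ≤ (((2 * c : ℕ) : ℕ∞) : ℝ≥0∞) := by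
      refine h2'.trans ?_
      push_cast
      rw [mul_one, two_mul]
    exact_mod_cast this
  have bound2 : ∀ u v : V, H.edist (φ u) (φ v) ≤ ((2 * c : ℕ) : ℕ∞) →
      G.edist u v ≤ ((3 * c ^ 2 : ℕ) : ℕ∞) := by
    intro u v h
    have hH : (H.edist (φ u) (φ v) : ℝ≥0∞) ≤ 2 * (c : ℝ≥0∞) := by
      have : (H.edist (φ u) (φ v) : ℝ≥0∞) ≤ (((2 * c : ℕ) : ℕ∞) : ℝ≥0∞) := by
        exact_mod_cast h
      refine this.trans ?_
      push_cast
      exact le_refl _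
    have hd : (G.edist u v : ℝ≥0∞) / c ≤ 3 * c := by
      have h' := tsub_le_iff_right.mp ((h1 u v).trans hH)
      calc (G.edist u v : ℝ≥0∞) / c ≤ 2 * c + c := h'
        _ = 3 * c := by ring
    have hfin : (G.edist u v : ℝ≥0∞) ≤ (((3 * c ^ 2 : ℕ) : ℕ∞) : ℝ≥0∞) := by
      by_cases hc : (c : ℝ≥0∞) = 0
      · have hc0 : c = 0 := by exact_mod_cast hc
        have : (G.edist u v : ℝ≥0∞) = 0 := by
          by_contra h0
          rw [hc, ENNReal.div_zero h0] at hd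
          simp [hc] at hd
        simp [this]
      · have := (ENNReal.div_le_iff hc (by simp)).mp hd
        refine this.trans ?_
        push_cast
        ring_nf
        exact le_refl _
    exact_mod_cast hfin
  refine ⟨fun x => {v | ∃ w ∈ β x, H.edist (φ v) w ≤ (c : ℕ∞)}, ⟨?_, ?_⟩, ?_⟩
  · -- edges covered
    intro u v hadj
    obtain ⟨w, hw1, hw2⟩ := exists_mid' (bound1 u v hadj)
    obtain ⟨⟨x, hx⟩⟩ := (hdec.2 w).nonempty
    exact ⟨x, ⟨w, hx, hw1⟩, ⟨w, hx, by rwa [SimpleGraph.edist_comm]⟩⟩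
  · -- connectivity of the subtree of each vertex
    intro v
    set S : Set X := {x : X | v ∈ {v | ∃ w ∈ β x, H.edist (φ v) w ≤ (c : ℕ∞)}} with hS
    obtain ⟨⟨y, hy⟩⟩ := (hdec.2 (φ v)).nonempty
    have hyS : y ∈ S := ⟨φ v, hy, by simp⟩
    have key : ∀ (w t : W) (p : H.Walk w t), t = φ v → p.length ≤ c →
        ∀ x, w ∈ β x → ∀ (hxS : x ∈ S),
          (T.induce S).Reachable ⟨x, hxS⟩ ⟨y, hyS⟩ := by
      intro w t p
      induction p with
      | nil =>
        rintro rfl _ x hx hxS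
        exact reach_induce_mono (A := {z : X | φ v ∈ β z}) (S := S)
          (fun z hz => ⟨φ v, hz, by simp⟩) (hdec.2 (φ v)) hx hy hxS hyS
      | @cons w u _ h q ih =>
        rintro rfl hp x hx hxS
        have ih := ih rfl
        have hq : q.length ≤ c := by
          simp only [SimpleGraph.Walk.length_cons] at hp; omega
        obtain ⟨x', hwx', hux'⟩ := hdec.1 h
        have hwc : H.edist (φ v) w ≤ (c : ℕ∞) := by
          rw [SimpleGraph.edist_comm]
          refine (SimpleGraph.edist_le (SimpleGraph.Walk.cons h q)).trans ?_
          simp only [SimpleGraph.Walk.length_cons]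
          exact_mod_cast hp
        have hx'S : x' ∈ S := ⟨w, hwx', hwc⟩
        have r1 : (T.induce S).Reachable ⟨x, hxS⟩ ⟨x', hx'S⟩ :=
          reach_induce_mono (A := {z : X | w ∈ β z}) (S := S)
            (fun z hz => ⟨w, hz, hwc⟩) (hdec.2 w) hx hwx' hxS hx'S
        exact r1.trans (ih hq x' hux' hx'S)
    haveI : Nonempty {z : X // z ∈ S} := ⟨⟨y, hyS⟩⟩
    refine SimpleGraph.Connected.mk ?_
    rintro ⟨x, hxS⟩ ⟨x', hx'S⟩
    have build : ∀ (z : X) (hz : z ∈ S), (T.induce S).Reachable ⟨z, hz⟩ ⟨y, hyS⟩ := by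
      intro z hz
      have hz' := hz
      obtain ⟨w, hw, hwc⟩ := hz' 
      have hne : H.edist (φ v) w ≠ ⊤ := fun ht => by simp [ht] at hwc
      obtain ⟨p, hplen⟩ := SimpleGraph.exists_walk_of_edist_ne_top hne
      have hlen : p.length ≤ c := by
        have : (p.length : ℕ∞) ≤ (c : ℕ∞) := hplen ▸ hwc
        exact_mod_cast this
      have : p.reverse.length ≤ c := by rwa [SimpleGraph.Walk.length_reverse]
      exact key w (φ v) p.reverse rfl this z hw hz
    exact (build x hxS).trans (build x' hx'S).symm
  · -- centredness of bags
    intro x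
    have hfin : (β x).Finite := Set.finite_of_encard_le_coe (hwidth x)
    have hle : (β x).encard ≤ (Set.univ : Set (Fin (k + 1))).encard := by
      rw [Set.encard_univ]
      simpa using hwidth x
    obtain ⟨ι, hmaps, hinj⟩ := hfin.exists_injOn_of_encard_le hle
    set f : V → Fin (k + 1) := fun v =>
      if h : ∃ w ∈ β x, H.edist (φ v) w ≤ (c : ℕ∞) then ι h.choose else 0 with hf
    refine ⟨fun i => {v | (∃ w ∈ β x, H.edist (φ v) w ≤ (c : ℕ∞)) ∧ f v = i}, ?_, ?_, ?_⟩
    · ext v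
      constructor
      · rintro ⟨s, ⟨i, rfl⟩, hv, -⟩
        exact hv
      · intro hv
        exact Set.mem_iUnion.mpr ⟨f v, hv, rfl⟩
    · intro i j hij
      rw [Set.disjoint_left]
      rintro v ⟨-, hvi⟩ ⟨-, hvj⟩
      exact hij (hvi ▸ hvj ▸ rfl)
    · rintro i u ⟨hu, hfu⟩ v ⟨hv, hfv⟩
      have hfu' : f u = ι hu.choose := dif_pos hu
      have hfv' : f v = ι hv.choose := dif_pos hv
      obtain ⟨huw, hud⟩ := hu.choose_spec
      obtain ⟨hvw, hvd⟩ := hv.choose_spec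
      have heq : hu.choose = hv.choose := by
        apply hinj huw hvw
        rw [← hfu', ← hfv', hfu, hfv]
      apply bound2
      calc H.edist (φ u) (φ v)
          ≤ H.edist (φ u) hu.choose + H.edist hu.choose (φ v) := SimpleGraph.edist_triangle
        _ ≤ (c : ℕ∞) + (c : ℕ∞) := by
            have h2' : H.edist hu.choose (φ v) ≤ (c : ℕ∞) := by
              rw [heq, SimpleGraph.edist_comm]; exact hvd
            exact add_le_add hud h2'
        _ = ((2 * c : ℕ) : ℕ∞) := by push_cast; ring
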